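/- (Completeness and involutivity of the set {P_a, p̂·s}.) On {(x,p,s) ∈ Γ : p ≠ 0} define h(x,p,s) := (p·s)/|p|. Then {P_a, P_b} = 0 and {P_a, h} = 0 for all a,b (the functions P_1, P_2, P_3, h are in involution), and the set is complete: every C¹ function f on {(x,p,s) ∈ Γ : p ≠ 0} satisfying {P_a, f} = 0 for all a and {h, f} = 0 depends on phase space only through p, (p·s)/|p| and |s|, i.e. there exists a function F : ℝ³ × ℝ × ℝ → ℝ with f(x,p,s) = F(p, (p·s)/|p|, |s|) for all (x,p,s) with p ≠ 0. -/

import Mathlib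

noncomputable section

open Finset

abbrev R3 := Fin 3 → ℝ

/-- The spin phase space Γ = ℝ³ × ℝ³ × ℝ³ with points (x, p, s). -/
abbrev Phase := R3 × R3 × R3

/-- Euclidean dot product on ℝ³. -/
def dot3 (v w : R3) : ℝ := ∑ a, v a * w a

/-- Euclidean norm on ℝ³. -/
def norm3 (v : R3) : ℝ := Real.sqrt (dot3 v v)

/-- Cross product on ℝ³. -/
def cross3 (v w : R3) : R3 :=
  ![v 1 * w 2 - v 2 * w 1, v 2 * w 0 - v 0 * w 2, v 0 * w 1 - v 1 * w 0]

/-- Kronecker delta. -/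
def kdelta (a b : Fin 3) : ℝ := if a = b then 1 else 0

/-- Sign of an integer, valued in ℝ. -/
def isgn (x : ℤ) : ℝ := if 0 < x then 1 else if x < 0 then -1 else 0

/-- Totally antisymmetric symbol on three indices with ε₀₁₂ = +1. -/
def eps3 (a b c : Fin 3) : ℝ :=
  isgn (((b : ℕ) : ℤ) - ((a : ℕ) : ℤ)) * isgn (((c : ℕ) : ℤ) - ((a : ℕ) : ℤ)) *
  isgn (((c : ℕ) : ℤ) - ((b : ℕ) : ℤ))

/-- Gradient of f with respect to x. -/
def dX (f : Phase → ℝ) (γ : Phase) : R3 := fun a => fderiv ℝ f γ (Pi.single a 1, 0, 0)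

/-- Gradient of f with respect to p. -/
def dP (f : Phase → ℝ) (γ : Phase) : R3 := fun a => fderiv ℝ f γ (0, Pi.single a 1, 0)

/-- Gradient of f with respect to s. -/
def dS (f : Phase → ℝ) (γ : Phase) : R3 := fun a => fderiv ℝ f γ (0, 0, Pi.single a 1)

/-- Poisson bracket {f,g} = ∇ₓf·∇ₚg − ∇ₚf·∇ₓg + s·(∇ₛf × ∇ₛg) on Γ. -/
def pb (f g : Phase → ℝ) (γ : Phase) : ℝ :=
  dot3 (dX f γ) (dP g γ) - dot3 (dP f γ) (dX g γ)
    + dot3 γ.2.2 (cross3 (dS f γ) (dS g γ))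

/-- Generator of spatial translations: P_a(x,p,s) = p_a. -/
def Pgen (a : Fin 3) : Phase → ℝ := fun γ => γ.2.1 a

/-- Generator of rotations: J_ab(x,p,s) = x_a p_b − x_b p_a + ε_{abc} s_c. -/
def Jgen (a b : Fin 3) : Phase → ℝ :=
  fun γ => γ.1 a * γ.2.1 b - γ.1 b * γ.2.1 a + ∑ c, eps3 a b c * γ.2.2 c

/-- The subset of phase space where the momentum is nonzero. -/
def PhaseStar : Set Phase := {γ | γ.2.1 ≠ 0}

/-- The function h(x,p,s) = (p·s)/|p| (the helicity-type invariant p̂·s). -/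
def hfun : Phase → ℝ := fun γ => dot3 γ.2.1 γ.2.2 / norm3 γ.2.1

lemma dot3_expand (v w : R3) : dot3 v w = v 0 * w 0 + v 1 * w 1 + v 2 * w 2 := by
  simp [dot3, Fin.sum_univ_three]

lemma s19_triple (a b c : R3) : dot3 a (cross3 b c) = dot3 c (cross3 a b) := by
  simp [dot3_expand, cross3]; ring

lemma s19_lagrange (n u : R3) :
    dot3 (cross3 n u) (cross3 n u) = dot3 n n * dot3 u u - dot3 n u * dot3 n u := by
  simp [dot3_expand, cross3]; ring

lemma s19_cross_cross (n u : R3) :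
    cross3 n (cross3 n u) = fun a => dot3 n u * n a - dot3 n n * u a := by
  funext a; fin_cases a <;> simp [dot3_expand, cross3] <;> ring

lemma s19_dot_self_cross (n u : R3) : dot3 u (cross3 n u) = 0 := by
  simp [dot3_expand, cross3]; ring

lemma s19_cofactor (n u x : R3) (a : Fin 3) :
    x a * dot3 n (cross3 u (cross3 n u)) =
      dot3 x (cross3 u (cross3 n u)) * n a + dot3 x (cross3 (cross3 n u) n) * u a
        + dot3 x (cross3 n u) * (cross3 n u) a := by
  fin_cases a <;> simp [dot3_expand, cross3] <;> ring

lemma dot3_self_nonneg (v : R3) : 0 ≤ dot3 v v :=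
  Finset.sum_nonneg fun a _ => mul_self_nonneg _

lemma dot3_self_pos (v : R3) (hv : v ≠ 0) : 0 < dot3 v v := by
  rcases (dot3_self_nonneg v).lt_or_eq with h | h
  · exact h
  · exfalso; apply hv; funext a
    have h2 := (Finset.sum_eq_zero_iff_of_nonneg (fun a _ => mul_self_nonneg (v a))).1 h.symm a (Finset.mem_univ a)
    simpa using mul_self_eq_zero.1 h2

lemma norm3_pos (v : R3) (hv : v ≠ 0) : 0 < norm3 v :=
  Real.sqrt_pos.2 (dot3_self_pos v hv)

lemma sq_norm3 (v : R3) : norm3 v ^ 2 = dot3 v v :=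
  Real.sq_sqrt (dot3_self_nonneg v)

lemma pi_decomp (v : R3) : v = ∑ a, v a • (Pi.single a 1 : R3) := by
  funext b
  simp [Finset.sum_apply, Pi.single_apply]

/-- coordinate CLMs -/
def LX3 (a : Fin 3) : Phase →L[ℝ] ℝ :=
  (ContinuousLinearMap.proj a).comp (ContinuousLinearMap.fst ℝ R3 (R3 × R3))
def LP3 (a : Fin 3) : Phase →L[ℝ] ℝ :=
  (ContinuousLinearMap.proj a).comp
    ((ContinuousLinearMap.fst ℝ R3 R3).comp (ContinuousLinearMap.snd ℝ R3 (R3 × R3)))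
def LS3 (a : Fin 3) : Phase →L[ℝ] ℝ :=
  (ContinuousLinearMap.proj a).comp
    ((ContinuousLinearMap.snd ℝ R3 R3).comp (ContinuousLinearMap.snd ℝ R3 (R3 × R3)))

@[simp] lemma LX3_apply (a : Fin 3) (γ : Phase) : LX3 a γ = γ.1 a := rfl
@[simp] lemma LP3_apply (a : Fin 3) (γ : Phase) : LP3 a γ = γ.2.1 a := rfl
@[simp] lemma LS3_apply (a : Fin 3) (γ : Phase) : LS3 a γ = γ.2.2 a := rfl

/-- decomposition of direction vectors -/
lemma decompX (v : R3) :
    ((v, 0, 0) : Phase) = ∑ a, v a • (((Pi.single a 1 : R3), (0:R3), (0:R3)) : Phase) := by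
  rw [Fin.sum_univ_three]
  refine Prod.ext ?_ (Prod.ext ?_ ?_) <;> simp
  have h := pi_decomp v; rw [Fin.sum_univ_three] at h; exact h

lemma decompS (w : R3) :
    ((0, 0, w) : Phase) = ∑ a, w a • (((0:R3), (0:R3), (Pi.single a 1 : R3)) : Phase) := by
  rw [Fin.sum_univ_three]
  refine Prod.ext ?_ (Prod.ext ?_ ?_) <;> simp
  have h := pi_decomp w; rw [Fin.sum_univ_three] at h; exact h

lemma fderiv_applyX (f : Phase → ℝ) (γ : Phase) (v : R3) :
    fderiv ℝ f γ (v, 0, 0) = dot3 (dX f γ) v := by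
  rw [decompX v, map_sum, dot3]
  refine Finset.sum_congr rfl fun a _ => ?_
  rw [map_smul]
  simp [dX, mul_comm]

lemma fderiv_applyS (f : Phase → ℝ) (γ : Phase) (w : R3) :
    fderiv ℝ f γ (0, 0, w) = dot3 (dS f γ) w := by
  rw [decompS w, map_sum, dot3]
  refine Finset.sum_congr rfl fun a _ => ?_
  rw [map_smul]
  simp [dS, mul_comm]
lemma Pgen_fderiv (a : Fin 3) (γ : Phase) : fderiv ℝ (Pgen a) γ = LP3 a :=
  HasFDerivAt.fderiv ((LP3 a).hasFDerivAt (x := γ))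

lemma dX_Pgen (a : Fin 3) (γ : Phase) : dX (Pgen a) γ = fun _ => 0 := by
  funext b; simp [dX, Pgen_fderiv, LP3]

lemma dS_Pgen (a : Fin 3) (γ : Phase) : dS (Pgen a) γ = fun _ => 0 := by
  funext b; simp [dS, Pgen_fderiv, LP3]

lemma dP_Pgen (a : Fin 3) (γ : Phase) : dP (Pgen a) γ = fun b => if a = b then 1 else 0 := by
  funext b; simp [dP, Pgen_fderiv, LP3, Pi.single_apply]

lemma dot3_zero_left (w : R3) : dot3 (fun _ => 0) w = 0 := by simp [dot3]

lemma cross3_zero_left (w : R3) : cross3 (fun _ => 0) w = fun _ => 0 := by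
  funext a; fin_cases a <;> simp [cross3]

/-- hfun has an explicit derivative on PhaseStar. -/
lemma hfun_hasFDerivAt (γ : Phase) (hp : γ.2.1 ≠ 0) :
    ∃ L : Phase →L[ℝ] ℝ, HasFDerivAt hfun L γ ∧ (∀ v : R3, L (v, 0, 0) = 0) ∧
      (∀ w : R3, L (0, 0, w) = dot3 γ.2.1 w / norm3 γ.2.1) := by
  obtain ⟨x, p, s⟩ := γ
  simp only at hp ⊢
  have hQpos : 0 < dot3 p p := dot3_self_pos p hp
  have hD : norm3 p ≠ 0 := ne_of_gt (norm3_pos p hp)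
  -- numerator
  have hN : HasFDerivAt (fun γ : Phase => dot3 γ.2.1 γ.2.2)
      (∑ a, (p a • LS3 a + s a • LP3 a)) (x, p, s) := by
    have : HasFDerivAt (fun γ : Phase => ∑ a, LP3 a γ * LS3 a γ)
        (∑ a, (p a • LS3 a + s a • LP3 a)) (x, p, s) := by
      apply HasFDerivAt.fun_sum
      intro a _
      exact ((LP3 a).hasFDerivAt (x := (x,p,s))).mul ((LS3 a).hasFDerivAt (x := (x,p,s)))
    exact this
  -- square norm
  have hQ : HasFDerivAt (fun γ : Phase => dot3 γ.2.1 γ.2.1)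
      (∑ a, (p a • LP3 a + p a • LP3 a)) (x, p, s) := by
    have : HasFDerivAt (fun γ : Phase => ∑ a, LP3 a γ * LP3 a γ)
        (∑ a, (p a • LP3 a + p a • LP3 a)) (x, p, s) := by
      apply HasFDerivAt.fun_sum
      intro a _
      exact ((LP3 a).hasFDerivAt (x := (x,p,s))).mul ((LP3 a).hasFDerivAt (x := (x,p,s)))
    exact this
  have hsq : HasDerivAt (fun t => (Real.sqrt t)⁻¹)
      (-(1 / (2 * Real.sqrt (dot3 p p))) / Real.sqrt (dot3 p p) ^ 2) (dot3 p p) :=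
    (Real.hasDerivAt_sqrt (ne_of_gt hQpos)).inv
      (ne_of_gt (Real.sqrt_pos.2 hQpos))
  have hInv : HasFDerivAt (fun γ : Phase => (Real.sqrt (dot3 γ.2.1 γ.2.1))⁻¹)
      ((-(1 / (2 * Real.sqrt (dot3 p p))) / Real.sqrt (dot3 p p) ^ 2) •
        ∑ a, (p a • LP3 a + p a • LP3 a)) (x, p, s) :=
    by have := hsq.comp_hasFDerivAt (x, p, s) hQ; exact this
  have hmul := hN.fun_mul hInv
  have hfe : hfun = fun γ : Phase => dot3 γ.2.1 γ.2.2 * (Real.sqrt (dot3 γ.2.1 γ.2.1))⁻¹ := by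
    funext γ; simp [hfun, norm3, div_eq_mul_inv]
  rw [← hfe] at hmul
  refine ⟨_, hmul, ?_, ?_⟩
  · intro v
    simp [ContinuousLinearMap.sum_apply, Finset.mul_sum]
  · intro w
    have h1 : (∑ a, (p a • LS3 a + s a • LP3 a)) ((0,0,w) : Phase) = dot3 p w := by
      simp [ContinuousLinearMap.sum_apply, dot3]
    have h2 : (∑ a, (p a • LP3 a + p a • LP3 a)) ((0,0,w) : Phase) = 0 := by
      simp [ContinuousLinearMap.sum_apply]
    simp only [ContinuousLinearMap.add_apply, ContinuousLinearMap.smul_apply, h1, h2,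
      smul_eq_mul, mul_zero, zero_add]
    have : norm3 p = Real.sqrt (dot3 p p) := rfl
    rw [this, div_eq_mul_inv]
    ring
lemma dX_hfun (γ : Phase) (hp : γ.2.1 ≠ 0) : dX hfun γ = fun _ => 0 := by
  obtain ⟨L, hL, hLx, _⟩ := hfun_hasFDerivAt γ hp
  funext a
  simp only [dX, hL.fderiv]
  exact hLx _

lemma dS_hfun (γ : Phase) (hp : γ.2.1 ≠ 0) :
    dS hfun γ = fun a => γ.2.1 a / norm3 γ.2.1 := by
  obtain ⟨L, hL, _, hLs⟩ := hfun_hasFDerivAt γ hp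
  funext a
  rw [dS, hL.fderiv, show L (0, 0, Pi.single a 1) = dot3 γ.2.1 (Pi.single a 1) / norm3 γ.2.1 from hLs _]
  simp [dot3, Pi.single_apply, mul_comm]

lemma isOpen_phaseStar : IsOpen PhaseStar := by
  have : PhaseStar = (fun γ : Phase => γ.2.1) ⁻¹' {0}ᶜ := rfl
  rw [this]
  exact isOpen_compl_singleton.preimage (continuous_fst.comp continuous_snd)

lemma part1 : ∀ a b : Fin 3, ∀ γ ∈ PhaseStar, pb (Pgen a) (Pgen b) γ = 0 := by
  intro a b γ _
  simp [pb, dX_Pgen, dS_Pgen, dot3_zero_left, cross3_zero_left, dot3, cross3, Fin.sum_univ_three]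

lemma part2 : ∀ a : Fin 3, ∀ γ ∈ PhaseStar, pb (Pgen a) hfun γ = 0 := by
  intro a γ hγ
  have hx := dX_hfun γ hγ
  simp [pb, dX_Pgen, dS_Pgen, dP_Pgen, hx, dot3_zero_left, cross3_zero_left, dot3, cross3,
    Fin.sum_univ_three]
lemma dot3_comm (v w : R3) : dot3 v w = dot3 w v := by simp [dot3_expand]; ring

lemma dot3_zero_right (w : R3) : dot3 w (fun _ => 0) = 0 := by simp [dot3]

lemma dot3_neg_right (x z : R3) : dot3 x (fun a => -(z a)) = - dot3 x z := by
  simp [dot3_expand]; ring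

lemma dot3_lin (x w z : R3) (α β : ℝ) :
    dot3 x (fun a => α * w a + β * z a) = α * dot3 x w + β * dot3 x z := by
  simp [dot3_expand]; ring

lemma s19_bac_cab (a b c : R3) :
    cross3 a (cross3 b c) = fun i => dot3 a c * b i - dot3 a b * c i := by
  funext i; fin_cases i <;> simp [dot3_expand, cross3] <;> ring

lemma s19_anticomm (a b : R3) : cross3 a b = fun i => -(cross3 b a i) := by
  funext i; fin_cases i <;> simp [cross3] <;> ring

lemma cross3_comb (α β δ : ℝ) (n u v w : R3) :
    cross3 (fun a => α * n a + β * u a + δ * v a) w =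
      fun a => α * cross3 n w a + β * cross3 u w a + δ * cross3 v w a := by
  funext a; fin_cases a <;> simp [cross3] <;> ring

lemma cross3_self (n : R3) : cross3 n n = fun _ => 0 := by
  funext a; fin_cases a <;> simp [cross3] <;> ring

/-- f is differentiable at points of PhaseStar -/
lemma f_diffAt {f : Phase → ℝ} (hf : ContDiffOn ℝ 1 f PhaseStar) {γ : Phase}
    (hγ : γ ∈ PhaseStar) : DifferentiableAt ℝ f γ :=
  (hf.differentiableOn one_ne_zero).differentiableAt (isOpen_phaseStar.mem_nhds hγ)

/-- the translation conditions force the x-gradient to vanish -/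
lemma dXf_zero {f : Phase → ℝ}
    (hPa : ∀ a : Fin 3, ∀ γ ∈ PhaseStar, pb (Pgen a) f γ = 0)
    {γ : Phase} (hγ : γ ∈ PhaseStar) : dX f γ = fun _ => 0 := by
  funext a
  have h := hPa a γ hγ
  simp [pb, dX_Pgen, dS_Pgen, dP_Pgen, dot3_zero_left, cross3_zero_left,
    dot3, cross3, Fin.sum_univ_three, Pi.single_apply] at h
  fin_cases a <;> simp_all

/-- f does not depend on x -/
lemma xconst {f : Phase → ℝ} (hf : ContDiffOn ℝ 1 f PhaseStar)
    (hPa : ∀ a : Fin 3, ∀ γ ∈ PhaseStar, pb (Pgen a) f γ = 0)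
    (x y p s : R3) (hp : p ≠ 0) : f (x, p, s) = f (y, p, s) := by
  set c : ℝ → Phase := fun t => (x + t • (y - x), p, s) with hc
  have hmem : ∀ t : ℝ, c t ∈ PhaseStar := fun t => hp
  have hder : ∀ t : ℝ, HasDerivAt (fun t => f (c t)) 0 t := by
    intro t
    have h1 : HasDerivAt (fun t : ℝ => x + t • (y - x)) (y - x) t := by
      have := ((hasDerivAt_id t).smul_const (y - x)).const_add x
      simpa using this
    have hc' : HasDerivAt c ((y - x, 0, 0) : Phase) t :=
      h1.prodMk (hasDerivAt_const t (p, s))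
    have hfd := (f_diffAt hf (hmem t)).hasFDerivAt
    have := hfd.comp_hasDerivAt t hc'
    have hval : fderiv ℝ f (c t) ((y - x, 0, 0) : Phase) = 0 := by
      rw [fderiv_applyX, dXf_zero hPa (hmem t), dot3_zero_left]
    rwa [hval] at this
  have hconst := is_const_of_deriv_eq_zero (fun t => (hder t).differentiableAt)
    (fun t => (hder t).deriv) 0 1
  simpa [hc] using hconst
lemma dot3_lin_sub (x w z : R3) (α β : ℝ) :
    dot3 x (fun a => α * w a - β * z a) = α * dot3 x w - β * dot3 x z := by
  simp [dot3_expand]; ring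

lemma cross3_zero_right (w : R3) : cross3 w 0 = fun _ => 0 := by
  funext a; fin_cases a <;> simp [cross3]

/-- geometry: two vectors orthogonal to n with the same length are related by
a rotation about n. -/
lemma rot_exists (n u u' : R3) (hnn : dot3 n n = 1) (hnu : dot3 n u = 0)
    (hnu' : dot3 n u' = 0) (he : dot3 u u = dot3 u' u') :
    ∃ t : ℝ, ∀ a, Real.cos t * u a + Real.sin t * cross3 n u a = u' a := by
  rcases eq_or_lt_of_le (dot3_self_nonneg u) with hz | hρ
  · -- u = 0 and u' = 0
    have hu0 : u = 0 := by
      by_contra h0; exact absurd hz.symm (ne_of_gt (dot3_self_pos u h0))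
    have hu'0 : u' = 0 := by
      by_contra h0
      have := dot3_self_pos u' h0
      rw [← he, ← hz] at this
      exact lt_irrefl _ this
    refine ⟨0, fun a => ?_⟩
    rw [hu0, hu'0, cross3_zero_right]
    norm_num
  · set v : R3 := cross3 n u with hv
    have hρ2ne : dot3 u u ≠ 0 := ne_of_gt hρ
    have hvv : dot3 v v = dot3 u u := by
      rw [hv, s19_lagrange, hnn, hnu]; ring
    have huv : dot3 u v = 0 := s19_dot_self_cross n u
    obtain ⟨cc, hcc⟩ : ∃ c : ℝ, c = dot3 u' u / dot3 u u := ⟨_, rfl⟩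
    obtain ⟨dd, hdd⟩ : ∃ d : ℝ, d = dot3 u' v / dot3 u u := ⟨_, rfl⟩
    have hexp : ∀ a, u' a = cc * u a + dd * v a := by
      intro a
      have hcof := s19_cofactor n u u' a
      have e1 : dot3 n (cross3 u (cross3 n u)) = dot3 u u := by
        rw [s19_triple n u (cross3 n u), ← hv, hvv]
      have e2 : dot3 u' (cross3 u (cross3 n u)) = 0 := by
        rw [s19_bac_cab u n u, dot3_lin_sub, dot3_comm u' n, hnu', dot3_comm u n, hnu]
        ring
      have e3 : dot3 u' (cross3 (cross3 n u) n) = dot3 u' u := by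
        rw [s19_anticomm (cross3 n u) n, dot3_neg_right, s19_bac_cab n n u, dot3_lin_sub,
          hnn, hnu]
        ring
      rw [e1, e2, e3, ← hv] at hcof
      rw [hcc, hdd]
      field_simp
      linarith [hcof]
    have hq : dot3 u' u' = cc ^ 2 * dot3 u u + dd ^ 2 * dot3 v v + 2 * cc * dd * dot3 u v := by
      simp only [dot3_expand]
      rw [hexp 0, hexp 1, hexp 2]
      ring
    have hcd : cc ^ 2 + dd ^ 2 = 1 := by
      have h' : dot3 u u * (cc ^ 2 + dd ^ 2) = dot3 u u * 1 := by
        rw [← he] at hq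
        rw [hvv, huv] at hq
        linear_combination -hq
      exact (mul_left_cancel₀ hρ2ne h')
    have hc1 : -1 ≤ cc := by nlinarith
    have hc2 : cc ≤ 1 := by nlinarith
    refine ⟨if 0 ≤ dd then Real.arccos cc else -Real.arccos cc, fun a => ?_⟩
    have hcos0 : Real.cos (if 0 ≤ dd then Real.arccos cc else -Real.arccos cc) = cc := by
      split <;> simp [Real.cos_arccos hc1 hc2]
    have hsin0 : Real.sin (if 0 ≤ dd then Real.arccos cc else -Real.arccos cc) = dd := by
      have hs : Real.sin (Real.arccos cc) = Real.sqrt (1 - cc ^ 2) := Real.sin_arccos cc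
      have h1cc : 1 - cc ^ 2 = dd ^ 2 := by linarith
      by_cases hle : 0 ≤ dd
      · rw [if_pos hle, hs, h1cc, Real.sqrt_sq_eq_abs, abs_of_nonneg hle]
      · rw [if_neg hle, Real.sin_neg, hs, h1cc, Real.sqrt_sq_eq_abs,
          abs_of_neg (lt_of_not_ge hle)]
        ring
    rw [hcos0, hsin0]
    exact (hexp a).symm
/-- rotation flow about the axis p/|p| -/
def rcurve (p u : R3) (hh t : ℝ) : R3 := fun a =>
  hh * (p a / norm3 p) + Real.cos t * u a +
    Real.sin t * cross3 (fun b => p b / norm3 p) u a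

def rcurveD (p u : R3) (t : ℝ) : R3 := fun a =>
  -Real.sin t * u a + Real.cos t * cross3 (fun b => p b / norm3 p) u a

lemma rcurve_hasDeriv (p u : R3) (hh t : ℝ) :
    HasDerivAt (fun t => rcurve p u hh t) (rcurveD p u t) t := by
  rw [hasDerivAt_pi]
  intro a
  have hcos : HasDerivAt (fun t : ℝ => Real.cos t * u a) (-Real.sin t * u a) t :=
    (Real.hasDerivAt_cos t).mul_const (u a)
  have hsin : HasDerivAt
      (fun t : ℝ => Real.sin t * cross3 (fun b => p b / norm3 p) u a)
      (Real.cos t * cross3 (fun b => p b / norm3 p) u a) t :=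
    (Real.hasDerivAt_sin t).mul_const _
  have := (hcos.add hsin).const_add (hh * (p a / norm3 p))
  simpa [rcurve, rcurveD, add_assoc] using this

lemma rcurve_key (p u : R3) (hh t : ℝ)
    (hnn : dot3 (fun a => p a / norm3 p) (fun a => p a / norm3 p) = 1)
    (hnu : dot3 (fun a => p a / norm3 p) u = 0) :
    cross3 (rcurve p u hh t) (fun a => p a / norm3 p) =
      fun a => -(rcurveD p u t a) := by
  have hcomb := cross3_comb hh (Real.cos t) (Real.sin t)
    (fun a => p a / norm3 p) u (cross3 (fun b => p b / norm3 p) u)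
    (fun a => p a / norm3 p)
  have h3 := cross3_self (fun a => p a / norm3 p)
  have h4 : cross3 u (fun a => p a / norm3 p) =
      fun i => -(cross3 (fun b => p b / norm3 p) u i) :=
    s19_anticomm u _
  have h5 : cross3 (cross3 (fun b => p b / norm3 p) u) (fun a => p a / norm3 p) =
      fun i => u i := by
    rw [s19_anticomm (cross3 (fun b => p b / norm3 p) u) _,
      s19_bac_cab (fun b => p b / norm3 p) (fun b => p b / norm3 p) u]
    funext i; rw [hnn, hnu]; ring
  have : cross3 (rcurve p u hh t) (fun a => p a / norm3 p) =
      fun a => hh * cross3 (fun b => p b / norm3 p) (fun b => p b / norm3 p) a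
        + Real.cos t * cross3 u (fun b => p b / norm3 p) a
        + Real.sin t * cross3 (cross3 (fun b => p b / norm3 p) u) (fun b => p b / norm3 p) a := by
    exact hcomb
  rw [this, h3, h4, h5]
  funext a; simp only [rcurveD]; ring

lemma flow_const {f : Phase → ℝ} (hf : ContDiffOn ℝ 1 f PhaseStar)
    (hPa : ∀ a : Fin 3, ∀ γ ∈ PhaseStar, pb (Pgen a) f γ = 0)
    (hH : ∀ γ ∈ PhaseStar, pb hfun f γ = 0)
    (x p : R3) (hp : p ≠ 0) (hh : ℝ) (u : R3)
    (hnn : dot3 (fun a => p a / norm3 p) (fun a => p a / norm3 p) = 1)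
    (hnu : dot3 (fun a => p a / norm3 p) u = 0) (t0 : ℝ) :
    f (x, p, rcurve p u hh t0) = f (x, p, rcurve p u hh 0) := by
  have hmem : ∀ t : ℝ, ((x, p, rcurve p u hh t) : Phase) ∈ PhaseStar := fun t => hp
  have hder : ∀ t : ℝ, HasDerivAt (fun t => f (x, p, rcurve p u hh t)) 0 t := by
    intro t
    have hcder : HasDerivAt (fun t : ℝ => ((x, p, rcurve p u hh t) : Phase))
        ((0, 0, rcurveD p u t) : Phase) t :=
      (hasDerivAt_const t x).prodMk ((hasDerivAt_const t p).prodMk (rcurve_hasDeriv p u hh t))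
    have hfd := (f_diffAt hf (hmem t)).hasFDerivAt
    have hcomp := hfd.comp_hasDerivAt t hcder
    have hXz : dX f (x, p, rcurve p u hh t) = fun _ => 0 := dXf_zero hPa (hmem t)
    have hpb := hH (x, p, rcurve p u hh t) (hmem t)
    unfold pb at hpb
    rw [dX_hfun _ (hmem t), dS_hfun _ (hmem t), hXz, dot3_zero_left, dot3_zero_right] at hpb
    simp only [sub_zero, zero_add, zero_sub, neg_eq_zero] at hpb
    have hpb2 : dot3 (rcurve p u hh t)
        (cross3 (fun a => p a / norm3 p) (dS f (x, p, rcurve p u hh t))) = 0 := hpb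
    rw [s19_triple] at hpb2
    rw [rcurve_key p u hh t hnn hnu, dot3_neg_right, neg_eq_zero] at hpb2
    have hval : fderiv ℝ f ((x, p, rcurve p u hh t) : Phase)
        ((0, 0, rcurveD p u t) : Phase) = 0 := by
      rw [fderiv_applyS]; exact hpb2
    rwa [hval] at hcomp
  exact is_const_of_deriv_eq_zero (fun t => (hder t).differentiableAt)
    (fun t => (hder t).deriv) t0 0
lemma rotinv {f : Phase → ℝ} (hf : ContDiffOn ℝ 1 f PhaseStar)
    (hPa : ∀ a : Fin 3, ∀ γ ∈ PhaseStar, pb (Pgen a) f γ = 0)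
    (hH : ∀ γ ∈ PhaseStar, pb hfun f γ = 0)
    (x p s s' : R3) (hp : p ≠ 0) (h1 : dot3 p s = dot3 p s')
    (h2 : dot3 s s = dot3 s' s') : f (x, p, s) = f (x, p, s') := by
  have hne : norm3 p ≠ 0 := ne_of_gt (norm3_pos p hp)
  have Enn : dot3 (fun a => p a / norm3 p) (fun a => p a / norm3 p) = 1 := by
    have hpp := sq_norm3 p
    simp only [dot3_expand] at hpp ⊢
    field_simp
    linarith
  obtain ⟨hh, hhh⟩ : ∃ c : ℝ, c = dot3 (fun a => p a / norm3 p) s := ⟨_, rfl⟩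
  have hhh' : dot3 (fun a => p a / norm3 p) s' = hh := by
    simp only [dot3_expand] at hhh h1 ⊢
    field_simp at hhh ⊢
    linarith
  obtain ⟨u, hu⟩ : ∃ u : R3, u = fun a => s a - hh * (p a / norm3 p) := ⟨_, rfl⟩
  obtain ⟨u', hu'⟩ : ∃ w : R3, w = fun a => s' a - hh * (p a / norm3 p) := ⟨_, rfl⟩
  have Enn2 := Enn
  simp only [dot3_expand] at Enn2
  have hnu : dot3 (fun a => p a / norm3 p) u = 0 := by
    rw [hu]
    simp only [dot3_expand] at hhh ⊢
    linear_combination -hhh - hh * Enn2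
  have hnu' : dot3 (fun a => p a / norm3 p) u' = 0 := by
    rw [hu']
    simp only [dot3_expand] at hhh' ⊢
    linear_combination hhh' - hh * Enn2
  have hueq : dot3 u u = dot3 u' u' := by
    rw [hu, hu']
    simp only [dot3_expand] at hhh hhh' h2 ⊢
    linear_combination h2 + 2 * hh * hhh + 2 * hh * hhh'
  obtain ⟨t0, ht0⟩ := rot_exists (fun a => p a / norm3 p) u u' Enn hnu hnu' hueq
  have e1 := flow_const hf hPa hH x p hp hh u Enn hnu t0
  have v1 : rcurve p u hh t0 = s' := by
    funext a
    have h5 := ht0 a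
    have h6 := congrFun hu' a
    simp only [rcurve]
    linarith
  have v2 : rcurve p u hh 0 = s := by
    funext a
    have h6 := congrFun hu a
    simp only [rcurve, Real.cos_zero, Real.sin_zero]
    linarith
  rw [v1, v2] at e1
  exact e1.symm

theorem statement19 :
    (∀ a b : Fin 3, ∀ γ ∈ PhaseStar, pb (Pgen a) (Pgen b) γ = 0) ∧
    (∀ a : Fin 3, ∀ γ ∈ PhaseStar, pb (Pgen a) hfun γ = 0) ∧
    (∀ f : Phase → ℝ, ContDiffOn ℝ 1 f PhaseStar →
      (∀ a : Fin 3, ∀ γ ∈ PhaseStar, pb (Pgen a) f γ = 0) →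
      (∀ γ ∈ PhaseStar, pb hfun f γ = 0) →
      ∃ F : R3 → ℝ → ℝ → ℝ, ∀ x p s : R3, p ≠ 0 →
        f (x, p, s) = F p (dot3 p s / norm3 p) (norm3 s)) := by
  refine ⟨part1, part2, ?_⟩
  intro f hf hPa hH
  classical
  refine ⟨fun p h r =>
    if H : ∃ σ : R3, p ≠ 0 ∧ dot3 p σ / norm3 p = h ∧ norm3 σ = r then
      f (0, p, H.choose) else 0, ?_⟩
  intro x p s hp
  have H : ∃ σ : R3, p ≠ 0 ∧ dot3 p σ / norm3 p = dot3 p s / norm3 p ∧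
      norm3 σ = norm3 s := ⟨s, hp, rfl, rfl⟩
  obtain ⟨hp', hd, hn⟩ := H.choose_spec
  have hne : norm3 p ≠ 0 := ne_of_gt (norm3_pos p hp)
  have hd' : dot3 p H.choose = dot3 p s := by
    have h9 := congrArg (fun t => t * norm3 p) hd
    simpa [div_mul_cancel₀, hne] using h9
  have hs2 : dot3 H.choose H.choose = dot3 s s := by
    rw [← sq_norm3, ← sq_norm3, hn]
  have e1 : f (x, p, s) = f (0, p, s) := xconst hf hPa x 0 p s hp
  have e2 : f (0, p, s) = f (0, p, H.choose) :=
    rotinv hf hPa hH 0 p s H.choose hp hd'.symm hs2.symm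
  simp only [dif_pos H]
  rw [e1, e2]
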